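/- Let d ≥ 5 be an integer. There exists a constant C = C(d) > 0 such that for all v, w ∈ ℤ^d: the function x ↦ ⟨v−x⟩^(2−d) · ⟨x−w⟩^(2−d) is summable over ℤ^d and ∑'_{x ∈ ℤ^d} ⟨v−x⟩^(2−d) · ⟨x−w⟩^(2−d) ≤ C · ⟨v−w⟩^(4−d). -/

import Mathlib

/-- Euclidean norm of a lattice point of `ℤ^d`. -/
noncomputable def euclNorm {d : ℕ} (x : Fin d → ℤ) : ℝ :=
  Real.sqrt (∑ i, ((x i : ℝ)) ^ 2)

/-- The "Japanese bracket" `⟨x⟩ = ‖x‖ + 1`. -/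
noncomputable def jap {d : ℕ} (x : Fin d → ℤ) : ℝ := euclNorm x + 1

/-- Sup norm of a lattice point of `ℤ^d`. -/
noncomputable def supNorm {d : ℕ} (x : Fin d → ℤ) : ℝ :=
  ((Finset.univ.sup (fun i => (x i).natAbs) : ℕ) : ℝ)

/-- The sup-norm box `B_y(M)` of radius `M` centred at `y`. -/
def latBox {d : ℕ} (y : Fin d → ℤ) (M : ℝ) : Set (Fin d → ℤ) :=
  {x | supNorm (x - y) ≤ M}

/-- The inner vertex boundary `∂B_y(M)` of the box `B_y(M)`. -/
def latBdry {d : ℕ} (y : Fin d → ℤ) (M : ℝ) : Set (Fin d → ℤ) :=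
  {x | x ∈ latBox y M ∧ ∃ x', x' ∉ latBox y M ∧ (∑ i, |x i - x' i|) = 1}


open scoped ENNReal

def supNat {d : ℕ} (x : Fin d → ℤ) : ℕ := Finset.univ.sup fun i => (x i).natAbs

lemma natAbs_cast_real (m : ℤ) : ((m.natAbs : ℝ)) = |(m : ℝ)| := by
  rw [Nat.cast_natAbs, Int.cast_abs]

lemma euclNorm_nonneg {d : ℕ} (x : Fin d → ℤ) : 0 ≤ euclNorm x := Real.sqrt_nonneg _

lemma one_le_jap {d : ℕ} (x : Fin d → ℤ) : 1 ≤ jap x := by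
  have := euclNorm_nonneg x; unfold jap; linarith

lemma jap_pos {d : ℕ} (x : Fin d → ℤ) : 0 < jap x := lt_of_lt_of_le one_pos (one_le_jap x)

lemma abs_coord_le {d : ℕ} (x : Fin d → ℤ) (i : Fin d) : |(x i : ℝ)| ≤ euclNorm x := by
  have h : (x i : ℝ)^2 ≤ ∑ j, ((x j : ℝ))^2 :=
    Finset.single_le_sum (f := fun j => ((x j : ℝ))^2) (fun j _ => sq_nonneg _) (Finset.mem_univ i)
  calc |(x i : ℝ)| = Real.sqrt ((x i : ℝ)^2) := (Real.sqrt_sq_eq_abs _).symm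
    _ ≤ euclNorm x := Real.sqrt_le_sqrt h

lemma supNat_le_euclNorm {d : ℕ} (x : Fin d → ℤ) : (supNat x : ℝ) ≤ euclNorm x := by
  rcases Nat.eq_zero_or_pos d with h | h
  · subst h
    have : supNat x = 0 := by simp [supNat]
    rw [this]
    exact_mod_cast euclNorm_nonneg x
  · have : Nonempty (Fin d) := ⟨⟨0, h⟩⟩
    obtain ⟨i, _, hi⟩ := Finset.exists_mem_eq_sup Finset.univ Finset.univ_nonempty
      (fun i => (x i).natAbs)
    rw [supNat, hi, natAbs_cast_real]
    exact abs_coord_le x i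

lemma supNat_add_one_le_jap {d : ℕ} (x : Fin d → ℤ) : (supNat x : ℝ) + 1 ≤ jap x := by
  have := supNat_le_euclNorm x; unfold jap; linarith

lemma euclNorm_le_sum {d : ℕ} (x : Fin d → ℤ) : euclNorm x ≤ ∑ i, |(x i : ℝ)| := by
  rw [euclNorm]
  have h : ∑ i, ((x i : ℝ))^2 ≤ (∑ i, |(x i : ℝ)|)^2 := by
    have key : ∀ i ∈ Finset.univ, ((x i : ℝ))^2 ≤ |(x i : ℝ)| * ∑ j, |(x j : ℝ)| := by
      intro i _
      calc ((x i : ℝ))^2 = |(x i : ℝ)| * |(x i : ℝ)| := by rw [← abs_mul, abs_mul_self]; ring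
        _ ≤ |(x i : ℝ)| * ∑ j, |(x j : ℝ)| := by
            exact mul_le_mul_of_nonneg_left
              (Finset.single_le_sum (fun j _ => abs_nonneg ((x j : ℝ))) (Finset.mem_univ i))
              (abs_nonneg _)
    calc ∑ i, ((x i : ℝ))^2 ≤ ∑ i, |(x i : ℝ)| * ∑ j, |(x j : ℝ)| := Finset.sum_le_sum key
      _ = (∑ i, |(x i : ℝ)|)^2 := by rw [← Finset.sum_mul]; ring
  calc Real.sqrt (∑ i, ((x i : ℝ))^2) ≤ Real.sqrt ((∑ i, |(x i : ℝ)|)^2) := Real.sqrt_le_sqrt h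
    _ = ∑ i, |(x i : ℝ)| := by
        rw [Real.sqrt_sq (Finset.sum_nonneg fun i _ => abs_nonneg _)]

lemma jap_le_supNat {d : ℕ} (x : Fin d → ℤ) : jap x ≤ ((d : ℝ) + 1) * ((supNat x : ℝ) + 1) := by
  have h1 : euclNorm x ≤ ∑ i, |(x i : ℝ)| := euclNorm_le_sum x
  have h2 : ∑ i, |(x i : ℝ)| ≤ (d : ℝ) * (supNat x : ℝ) := by
    calc ∑ i, |(x i : ℝ)| ≤ ∑ _i : Fin d, (supNat x : ℝ) := by
          apply Finset.sum_le_sum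
          intro i _
          have hle : (x i).natAbs ≤ supNat x :=
            Finset.le_sup (f := fun i => (x i).natAbs) (Finset.mem_univ i)
          rw [← natAbs_cast_real]
          exact_mod_cast hle
      _ = (d : ℝ) * (supNat x : ℝ) := by
          rw [Finset.sum_const, Finset.card_univ, Fintype.card_fin, nsmul_eq_mul]
  have hs : (0:ℝ) ≤ (supNat x : ℝ) := Nat.cast_nonneg _
  have hd : (0:ℝ) ≤ (d : ℝ) := Nat.cast_nonneg _
  unfold jap; nlinarith

noncomputable def embE {d : ℕ} (c : Fin d → ℤ) : EuclideanSpace ℝ (Fin d) :=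
  (WithLp.equiv 2 (Fin d → ℝ)).symm (fun i => (c i : ℝ))

lemma euclNorm_eq_norm {d : ℕ} (c : Fin d → ℤ) : euclNorm c = ‖embE c‖ := by
  unfold euclNorm
  rw [EuclideanSpace.norm_eq]
  congr 1
  apply Finset.sum_congr rfl
  intro i _
  simp only [embE, WithLp.equiv_symm_apply, WithLp.ofLp_toLp, Real.norm_eq_abs, sq_abs]

lemma euclNorm_add_le {d : ℕ} (a b : Fin d → ℤ) : euclNorm (a + b) ≤ euclNorm a + euclNorm b := by
  rw [euclNorm_eq_norm, euclNorm_eq_norm, euclNorm_eq_norm]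
  have heq : embE (a + b) = embE a + embE b := by
    ext i
    simp [embE]
  rw [heq]
  exact norm_add_le _ _

lemma jap_triangle {d : ℕ} (a b : Fin d → ℤ) : jap (a + b) + 1 ≤ jap a + jap b := by
  have := euclNorm_add_le a b; unfold jap; linarith


noncomputable def boxF (d n : ℕ) : Finset (Fin d → ℤ) :=
  Finset.Icc (fun _ => -(n:ℤ)) (fun _ => (n:ℤ))

lemma mem_boxF {d n : ℕ} {x : Fin d → ℤ} : x ∈ boxF d n ↔ supNat x ≤ n := by
  rw [boxF, Finset.mem_Icc, supNat, Finset.sup_le_iff]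
  constructor
  · intro ⟨h1, h2⟩ i _
    have hA := h1 i
    have hB := h2 i
    simp only at hA hB
    omega
  · intro h
    constructor <;> [skip; skip] <;>
      · intro i
        have := h i (Finset.mem_univ i)
        simp only at this ⊢
        omega

lemma card_boxF (d n : ℕ) : (boxF d n).card = (2*n+1)^d := by
  rw [boxF, Pi.card_Icc]
  have : ∀ i : Fin d, (Finset.Icc (-(n:ℤ)) (n:ℤ)).card = 2*n+1 := by
    intro i
    rw [Int.card_Icc]
    omega
  rw [Finset.prod_congr rfl (fun i _ => this i), Finset.prod_const, Finset.card_univ,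
    Fintype.card_fin]

noncomputable def shellF (d : ℕ) : ℕ → Finset (Fin d → ℤ)
  | 0 => boxF d 0
  | (n+1) => boxF d (n+1) \ boxF d n

lemma mem_shellF {d n : ℕ} {x : Fin d → ℤ} : x ∈ shellF d n ↔ supNat x = n := by
  cases n with
  | zero => rw [shellF, mem_boxF]; omega
  | succ n => rw [shellF, Finset.mem_sdiff, mem_boxF, mem_boxF]; omega

lemma pow_sub_pow_le_real {a b : ℝ} (hb : 0 ≤ b) (hab : b ≤ a) (m : ℕ) :
    a^m - b^m ≤ m * a^(m-1) * (a - b) := by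
  have ha : 0 ≤ a := le_trans hb hab
  have h := geom_sum₂_mul a b m
  rw [← h]
  have hbd : ∑ i ∈ Finset.range m, a^i * b^(m-1-i) ≤ m * a^(m-1) := by
    calc ∑ i ∈ Finset.range m, a^i * b^(m-1-i) ≤ ∑ _i ∈ Finset.range m, a^(m-1) := by
          apply Finset.sum_le_sum
          intro i hi
          rw [Finset.mem_range] at hi
          calc a^i * b^(m-1-i) ≤ a^i * a^(m-1-i) := by
                apply mul_le_mul_of_nonneg_left (pow_le_pow_left₀ hb hab _) (pow_nonneg ha _)
            _ = a^(m-1) := by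
                rw [← pow_add]
                congr 1
                omega
      _ = m * a^(m-1) := by rw [Finset.sum_const, Finset.card_range, nsmul_eq_mul]
  exact mul_le_mul_of_nonneg_right hbd (by linarith) |>.trans_eq rfl |>.trans
    (le_of_eq rfl)

lemma card_shellF_le (d n : ℕ) :
    ((shellF d n).card : ℝ) ≤ (2*(d:ℝ)+1) * (3*((n:ℝ)+1))^(d-1) := by
  have h3 : (0:ℝ) ≤ 3*((n:ℝ)+1) := by positivity
  cases n with
  | zero =>
    rw [shellF, card_boxF]
    simp only [Nat.cast_pow, Nat.mul_zero, Nat.zero_add, Nat.cast_one, one_pow]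
    have hd0 : (0:ℝ) ≤ (d:ℝ) := Nat.cast_nonneg d
    have : (1:ℝ) ≤ (2*(d:ℝ)+1) := by linarith
    have h2 : (1:ℝ) ≤ (3*((0:ℝ)+1))^(d-1) := one_le_pow₀ (by norm_num)
    push_cast
    nlinarith
  | succ n =>
    rw [shellF]
    have hsub : boxF d n ⊆ boxF d (n+1) := by
      intro x hx; rw [mem_boxF] at *; omega
    rw [Finset.card_sdiff_of_subset hsub, card_boxF, card_boxF]
    have hle : (2*n+1)^d ≤ (2*(n+1)+1)^d := Nat.pow_le_pow_left (by omega) d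
    rw [Nat.cast_sub hle]
    push_cast
    have key := pow_sub_pow_le_real (a := 2*(n:ℝ)+3) (b := 2*(n:ℝ)+1) (by positivity)
      (by linarith) d
    have e1 : (2*((n:ℝ)+1)+1) = 2*(n:ℝ)+3 := by ring
    rw [e1]
    have h2 : (2*(n:ℝ)+3)^(d-1) ≤ (3*(((n:ℝ)+1)+1))^(d-1) := by
      apply pow_le_pow_left₀ (by positivity) (by linarith)
    calc (2*(n:ℝ)+3)^d - (2*(n:ℝ)+1)^d ≤ d * (2*(n:ℝ)+3)^(d-1) * 2 := by
          have := key; linarith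
      _ ≤ (2*(d:ℝ)+1) * (3*(((n:ℝ)+1)+1))^(d-1) := by
          have hd0 : (0:ℝ) ≤ (d:ℝ) := Nat.cast_nonneg d
          nlinarith [pow_nonneg (show (0:ℝ) ≤ 2*(n:ℝ)+3 by positivity) (d-1)]


open ENNReal in
lemma tsum_le_shellSum {d : ℕ} (h : ℕ → ℝ≥0∞) :
    ∑' x : Fin d → ℤ, h (supNat x) ≤ ∑' n : ℕ, ((shellF d n).card : ℝ≥0∞) * h n := by
  rw [← (Equiv.sigmaFiberEquiv (supNat (d := d))).tsum_eq (fun x => h (supNat x))]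
  rw [ENNReal.tsum_sigma']
  apply ENNReal.tsum_le_tsum
  intro n
  have hcong : ∀ b : {x : Fin d → ℤ // supNat x = n},
      h (supNat ((Equiv.sigmaFiberEquiv (supNat (d := d))) ⟨n, b⟩)) = h n := by
    intro b
    simp [Equiv.sigmaFiberEquiv, b.prop]
  rw [tsum_congr hcong]
  rw [ENNReal.tsum_eq_iSup_sum]
  apply iSup_le
  intro s
  rw [Finset.sum_const, nsmul_eq_mul]
  apply mul_le_mul_left
  norm_cast
  apply Finset.card_le_card_of_injOn (fun b => b.val)
  · intro b _
    exact mem_shellF.mpr b.prop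
  · intro b _ b' _ hh
    exact Subtype.ext hh

lemma tail1d (T : ℝ) (hT : 0 < T) :
    ∑' n : ℕ, ENNReal.ofReal (if T < (n:ℝ)+1 then (((n:ℝ)+1)^2)⁻¹ else 0)
      ≤ ENNReal.ofReal (2 / T) := by
  rw [ENNReal.tsum_eq_iSup_sum]
  apply iSup_le
  intro s
  rw [← ENNReal.ofReal_sum_of_nonneg (fun n _ => by positivity)]
  apply ENNReal.ofReal_le_ofReal
  set g : ℕ → ℝ := fun n => if T < (n:ℝ)+1 then (((n:ℝ)+1)^2)⁻¹ else 0 with hg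
  set N := s.sup id + 1 with hN
  have hsub : s ⊆ Finset.range N := by
    intro n hn
    rw [Finset.mem_range, hN]
    exact Nat.lt_succ_of_le (Finset.le_sup (f := id) hn)
  have h1 : ∑ n ∈ s, g n ≤ ∑ n ∈ Finset.range N, g n :=
    Finset.sum_le_sum_of_subset_of_nonneg hsub (fun n _ _ => by positivity)
  have h2 : ∑ n ∈ Finset.range N, g n
      = ∑ i ∈ Finset.Ico 1 (N+1), (if T < (i:ℝ) then (((i:ℝ))^2)⁻¹ else 0) := by
    rw [Finset.sum_Ico_eq_sum_range]
    simp only [Nat.add_sub_cancel]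
    apply Finset.sum_congr rfl
    intro j _
    have : ((1 + j : ℕ) : ℝ) = (j:ℝ) + 1 := by push_cast; ring
    rw [hg]
    simp only [this]
  set k := ⌊T⌋₊ with hk
  have h3 : ∑ i ∈ Finset.Ico 1 (N+1), (if T < (i:ℝ) then (((i:ℝ))^2)⁻¹ else 0)
      ≤ ∑ i ∈ Finset.Ioo k (N+1), (((i:ℝ))^2)⁻¹ := by
    rw [← Finset.sum_filter]
    apply Finset.sum_le_sum_of_subset_of_nonneg
    · intro i hi
      rw [Finset.mem_filter, Finset.mem_Ico] at hi
      rw [Finset.mem_Ioo]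
      refine ⟨?_, hi.1.2⟩
      rw [hk]
      exact (Nat.floor_lt hT.le).mpr hi.2
    · intro i _ _; positivity
  have h4 : ∑ i ∈ Finset.Ioo k (N+1), (((i:ℝ))^2)⁻¹ ≤ 2 / ((k:ℝ)+1) := by
    have h := sum_Ioo_inv_sq_le (α := ℝ) k (N+1)
    convert h using 2
  have h5 : 2 / ((k:ℝ)+1) ≤ 2 / T := by
    apply div_le_div_of_nonneg_left (by norm_num) hT
    have := Nat.lt_floor_add_one T
    rw [hk]
    linarith
  linarith
lemma lemA {d : ℕ} (hd2 : 2 ≤ d) (S : ℝ) (hS : 1/2 ≤ S) :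
    ∑' y : Fin d → ℤ, ENNReal.ofReal (if jap y ≤ S then jap y ^ (2-(d:ℝ)) else 0)
      ≤ ENNReal.ofReal ((2*(d:ℝ)+1) * 3^(d-1) * 9 * S^2) := by
  have hd1 : 1 ≤ d := le_trans (by norm_num) hd2
  set c : ℝ := (2*(d:ℝ)+1) * 3^(d-1) with hc
  have hc0 : 0 ≤ c := by positivity
  set h : ℕ → ℝ≥0∞ := fun n =>
    ENNReal.ofReal (if (n:ℝ)+1 ≤ S then ((n:ℝ)+1) ^ (2-(d:ℝ)) else 0) with hh
  have hpt : ∀ y : Fin d → ℤ,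
      ENNReal.ofReal (if jap y ≤ S then jap y ^ (2-(d:ℝ)) else 0) ≤ h (supNat y) := by
    intro y
    by_cases hy : jap y ≤ S
    · have hn1 : (supNat y : ℝ) + 1 ≤ jap y := supNat_add_one_le_jap y
      have hcond : (supNat y : ℝ) + 1 ≤ S := le_trans hn1 hy
      rw [hh]
      simp only [hy, if_true, hcond]
      apply ENNReal.ofReal_le_ofReal
      exact Real.rpow_le_rpow_of_nonpos (by positivity) hn1 (by
        have : (2:ℝ) ≤ (d:ℝ) := by exact_mod_cast hd2
        linarith)
    · simp only [hy, if_false, ENNReal.ofReal_zero]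
      exact zero_le
  calc ∑' y : Fin d → ℤ, ENNReal.ofReal (if jap y ≤ S then jap y ^ (2-(d:ℝ)) else 0)
      ≤ ∑' y : Fin d → ℤ, h (supNat y) := ENNReal.tsum_le_tsum hpt
    _ ≤ ∑' n : ℕ, ((shellF d n).card : ℝ≥0∞) * h n := tsum_le_shellSum h
    _ ≤ ENNReal.ofReal ((2*(d:ℝ)+1) * 3^(d-1) * 9 * S^2) := by
        set M := ⌈S⌉₊ with hM
        have hMS : (M:ℝ) ≤ 3*S := by
          have h1 : (M:ℝ) < S + 1 := Nat.ceil_lt_add_one (by linarith)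
          linarith
        have hzero : ∀ n ∉ Finset.range M, ((shellF d n).card : ℝ≥0∞) * h n = 0 := by
          intro n hn
          rw [Finset.mem_range, not_lt] at hn
          have : ¬ ((n:ℝ)+1 ≤ S) := by
            push_neg
            have h1 : S ≤ (M:ℝ) := Nat.le_ceil S
            have h2 : (M:ℝ) ≤ (n:ℝ) := by exact_mod_cast hn
            linarith
          rw [hh]
          simp only [this, if_false, ENNReal.ofReal_zero, mul_zero]
        rw [tsum_eq_sum hzero]
        have hterm : ∀ n ∈ Finset.range M,
            ((shellF d n).card : ℝ≥0∞) * h n ≤ ENNReal.ofReal (c * (3*S)) := by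
          intro n hn
          rw [Finset.mem_range] at hn
          by_cases hcond : (n:ℝ)+1 ≤ S
          · rw [hh]
            simp only [hcond, if_true]
            rw [← ENNReal.ofReal_natCast, ← ENNReal.ofReal_mul (Nat.cast_nonneg _)]
            apply ENNReal.ofReal_le_ofReal
            have hcard : ((shellF d n).card : ℝ) ≤ (2*(d:ℝ)+1) * (3*((n:ℝ)+1))^(d-1) :=
              card_shellF_le d n
            have hpow : (3*((n:ℝ)+1))^(d-1) = 3^(d-1) * ((n:ℝ)+1)^(d-1) := mul_pow _ _ _
            have hrp : ((n:ℝ)+1)^(d-1) * ((n:ℝ)+1) ^ (2-(d:ℝ)) = (n:ℝ)+1 := by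
              rw [← Real.rpow_natCast ((n:ℝ)+1) (d-1), ← Real.rpow_add (by positivity)]
              have : ((d-1 : ℕ):ℝ) + (2-(d:ℝ)) = 1 := by
                rw [Nat.cast_sub hd1]
                push_cast
                ring
              rw [this, Real.rpow_one]
            have hstep : ((shellF d n).card : ℝ) * ((n:ℝ)+1) ^ (2-(d:ℝ))
                ≤ c * ((n:ℝ)+1) := by
              have hrnn : (0:ℝ) ≤ ((n:ℝ)+1) ^ (2-(d:ℝ)) := Real.rpow_nonneg (by positivity) _
              calc ((shellF d n).card : ℝ) * ((n:ℝ)+1) ^ (2-(d:ℝ))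
                  ≤ ((2*(d:ℝ)+1) * (3*((n:ℝ)+1))^(d-1)) * ((n:ℝ)+1) ^ (2-(d:ℝ)) :=
                    mul_le_mul_of_nonneg_right hcard hrnn
                _ = c * (((n:ℝ)+1)^(d-1) * ((n:ℝ)+1) ^ (2-(d:ℝ))) := by
                    rw [hpow, hc]; ring
                _ = c * ((n:ℝ)+1) := by rw [hrp]
            apply hstep.trans
            apply mul_le_mul_of_nonneg_left _ hc0
            have h2 : (n:ℝ)+1 ≤ (M:ℝ) := by exact_mod_cast hn
            linarith
          · rw [hh]
            simp only [hcond, if_false, ENNReal.ofReal_zero, mul_zero]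
            exact zero_le
        calc ∑ n ∈ Finset.range M, ((shellF d n).card : ℝ≥0∞) * h n
            ≤ ∑ _n ∈ Finset.range M, ENNReal.ofReal (c * (3*S)) := Finset.sum_le_sum hterm
          _ = (M : ℝ≥0∞) * ENNReal.ofReal (c * (3*S)) := by
              rw [Finset.sum_const, Finset.card_range, nsmul_eq_mul]
          _ = ENNReal.ofReal ((M:ℝ) * (c * (3*S))) := by
              rw [← ENNReal.ofReal_natCast, ← ENNReal.ofReal_mul (Nat.cast_nonneg _)]
          _ ≤ ENNReal.ofReal ((2*(d:ℝ)+1) * 3^(d-1) * 9 * S^2) := by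
              apply ENNReal.ofReal_le_ofReal
              have hS0 : (0:ℝ) ≤ S := by linarith
              calc (M:ℝ) * (c * (3*S)) ≤ (3*S) * (c * (3*S)) := by
                    apply mul_le_mul_of_nonneg_right hMS (by positivity)
                _ = (2*(d:ℝ)+1) * 3^(d-1) * 9 * S^2 := by rw [hc]; ring
lemma lemB {d : ℕ} (hd : 5 ≤ d) (S : ℝ) (hS : 1/2 ≤ S) :
    ∑' y : Fin d → ℤ, ENNReal.ofReal (if S < jap y then jap y ^ (4-2*(d:ℝ)) else 0)
      ≤ ENNReal.ofReal ((2*(d:ℝ)+1) * 3^(d-1) * 2 * ((d:ℝ)+1)^d * S ^ (4-(d:ℝ))) := by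
  have hdr : (5:ℝ) ≤ (d:ℝ) := by exact_mod_cast hd
  have hS0 : (0:ℝ) < S := by linarith
  set c : ℝ := (2*(d:ℝ)+1) * 3^(d-1) with hc
  have hc0 : 0 ≤ c := by positivity
  set T : ℝ := S / ((d:ℝ)+1) with hT
  have hT0 : 0 < T := by rw [hT]; positivity
  set h : ℕ → ℝ≥0∞ := fun n =>
    ENNReal.ofReal (if S < ((d:ℝ)+1)*((n:ℝ)+1) then ((n:ℝ)+1) ^ (4-2*(d:ℝ)) else 0) with hh
  have hpt : ∀ y : Fin d → ℤ,
      ENNReal.ofReal (if S < jap y then jap y ^ (4-2*(d:ℝ)) else 0) ≤ h (supNat y) := by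
    intro y
    by_cases hy : S < jap y
    · have hn1 : (supNat y : ℝ) + 1 ≤ jap y := supNat_add_one_le_jap y
      have hup : jap y ≤ ((d:ℝ)+1) * ((supNat y : ℝ) + 1) := jap_le_supNat y
      have hcond : S < ((d:ℝ)+1)*((supNat y : ℝ)+1) := lt_of_lt_of_le hy hup
      rw [hh]
      simp only [hy, if_true, hcond]
      apply ENNReal.ofReal_le_ofReal
      exact Real.rpow_le_rpow_of_nonpos (by positivity) hn1 (by linarith)
    · simp only [hy, if_false, ENNReal.ofReal_zero]
      exact zero_le
  have hterm : ∀ n : ℕ, ((shellF d n).card : ℝ≥0∞) * h n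
      ≤ ENNReal.ofReal (c * T ^ (5-(d:ℝ)))
        * ENNReal.ofReal (if T < (n:ℝ)+1 then (((n:ℝ)+1)^2)⁻¹ else 0) := by
    intro n
    by_cases hcond : S < ((d:ℝ)+1)*((n:ℝ)+1)
    · have hTn : T < (n:ℝ)+1 := by
        rw [hT, div_lt_iff₀ (by positivity)]
        linarith [hcond]
      rw [hh]
      simp only [hcond, if_true, hTn]
      rw [← ENNReal.ofReal_natCast, ← ENNReal.ofReal_mul (Nat.cast_nonneg _),
        ← ENNReal.ofReal_mul (by positivity)]
      apply ENNReal.ofReal_le_ofReal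
      have hcard : ((shellF d n).card : ℝ) ≤ (2*(d:ℝ)+1) * (3*((n:ℝ)+1))^(d-1) :=
        card_shellF_le d n
      have hn0 : (0:ℝ) < (n:ℝ)+1 := by positivity
      have hrp : ((n:ℝ)+1)^(d-1) * ((n:ℝ)+1) ^ (4-2*(d:ℝ))
          = ((n:ℝ)+1) ^ (3-(d:ℝ)) := by
        rw [← Real.rpow_natCast ((n:ℝ)+1) (d-1), ← Real.rpow_add hn0]
        congr 1
        rw [Nat.cast_sub (by omega)]
        push_cast
        ring
      have hsplit : ((n:ℝ)+1) ^ (3-(d:ℝ)) ≤ T ^ (5-(d:ℝ)) * (((n:ℝ)+1)^2)⁻¹ := by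
        have e1 : ((n:ℝ)+1) ^ (3-(d:ℝ))
            = ((n:ℝ)+1) ^ (5-(d:ℝ)) * ((n:ℝ)+1) ^ (-2:ℝ) := by
          rw [← Real.rpow_add hn0]
          congr 1
          ring
        have e2 : ((n:ℝ)+1) ^ (-2:ℝ) = (((n:ℝ)+1)^2)⁻¹ := by
          rw [Real.rpow_neg (le_of_lt hn0)]
          congr 1
          rw [← Real.rpow_natCast ((n:ℝ)+1) 2]
          norm_num
        have e3 : ((n:ℝ)+1) ^ (5-(d:ℝ)) ≤ T ^ (5-(d:ℝ)) :=
          Real.rpow_le_rpow_of_nonpos hT0 (le_of_lt hTn) (by linarith)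
        rw [e1, e2]
        exact mul_le_mul_of_nonneg_right e3 (by positivity)
      calc ((shellF d n).card : ℝ) * ((n:ℝ)+1) ^ (4-2*(d:ℝ))
          ≤ ((2*(d:ℝ)+1) * (3*((n:ℝ)+1))^(d-1)) * ((n:ℝ)+1) ^ (4-2*(d:ℝ)) :=
            mul_le_mul_of_nonneg_right hcard (Real.rpow_nonneg (by positivity) _)
        _ = c * (((n:ℝ)+1)^(d-1) * ((n:ℝ)+1) ^ (4-2*(d:ℝ))) := by
            rw [mul_pow, hc]; ring
        _ = c * ((n:ℝ)+1) ^ (3-(d:ℝ)) := by rw [hrp]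
        _ ≤ c * (T ^ (5-(d:ℝ)) * (((n:ℝ)+1)^2)⁻¹) := mul_le_mul_of_nonneg_left hsplit hc0
        _ = c * T ^ (5-(d:ℝ)) * (((n:ℝ)+1)^2)⁻¹ := by ring
    · rw [hh]
      simp only [hcond, if_false, ENNReal.ofReal_zero, mul_zero]
      exact zero_le
  calc ∑' y : Fin d → ℤ, ENNReal.ofReal (if S < jap y then jap y ^ (4-2*(d:ℝ)) else 0)
      ≤ ∑' y : Fin d → ℤ, h (supNat y) := ENNReal.tsum_le_tsum hpt
    _ ≤ ∑' n : ℕ, ((shellF d n).card : ℝ≥0∞) * h n := tsum_le_shellSum h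
    _ ≤ ∑' n : ℕ, ENNReal.ofReal (c * T ^ (5-(d:ℝ)))
          * ENNReal.ofReal (if T < (n:ℝ)+1 then (((n:ℝ)+1)^2)⁻¹ else 0) :=
        ENNReal.tsum_le_tsum hterm
    _ = ENNReal.ofReal (c * T ^ (5-(d:ℝ)))
          * ∑' n : ℕ, ENNReal.ofReal (if T < (n:ℝ)+1 then (((n:ℝ)+1)^2)⁻¹ else 0) :=
        ENNReal.tsum_mul_left
    _ ≤ ENNReal.ofReal (c * T ^ (5-(d:ℝ))) * ENNReal.ofReal (2 / T) :=
        mul_le_mul_right (tail1d T hT0) _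
    _ ≤ ENNReal.ofReal ((2*(d:ℝ)+1) * 3^(d-1) * 2 * ((d:ℝ)+1)^d * S ^ (4-(d:ℝ))) := by
        rw [← ENNReal.ofReal_mul (by positivity)]
        apply ENNReal.ofReal_le_ofReal
        have e4 : c * T ^ (5-(d:ℝ)) * (2 / T) = 2 * c * T ^ (4-(d:ℝ)) := by
          rw [div_eq_mul_inv, ← Real.rpow_neg_one T, mul_comm (2:ℝ) (T ^ (-1:ℝ)),
            ← mul_assoc]
          rw [mul_assoc c _ _, ← Real.rpow_add hT0]
          norm_num
          ring
        rw [e4]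
        have e5 : T ^ (4-(d:ℝ)) = S ^ (4-(d:ℝ)) * (((d:ℝ)+1) ^ (4-(d:ℝ)))⁻¹ := by
          rw [hT, Real.div_rpow (le_of_lt hS0) (by positivity)]
          ring
        have e6 : (((d:ℝ)+1) ^ (4-(d:ℝ)))⁻¹ = ((d:ℝ)+1) ^ ((d:ℝ)-4) := by
          rw [← Real.rpow_neg (by positivity)]
          norm_num
        have e7 : ((d:ℝ)+1) ^ ((d:ℝ)-4) ≤ ((d:ℝ)+1) ^ (d:ℝ) :=
          Real.rpow_le_rpow_of_exponent_le (by linarith) (by linarith)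
        have e8 : ((d:ℝ)+1) ^ (d:ℝ) = ((d:ℝ)+1) ^ (d:ℕ) := Real.rpow_natCast _ d
        have hSr : (0:ℝ) ≤ S ^ (4-(d:ℝ)) := Real.rpow_nonneg (le_of_lt hS0) _
        calc 2 * c * T ^ (4-(d:ℝ))
            = 2 * c * (S ^ (4-(d:ℝ)) * (((d:ℝ)+1) ^ (4-(d:ℝ)))⁻¹) := by rw [e5]
          _ = 2 * c * S ^ (4-(d:ℝ)) * ((d:ℝ)+1) ^ ((d:ℝ)-4) := by rw [e6]; ring
          _ ≤ 2 * c * S ^ (4-(d:ℝ)) * ((d:ℝ)+1) ^ (d:ℝ) := by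
              apply mul_le_mul_of_nonneg_left e7 (by positivity)
          _ = (2*(d:ℝ)+1) * 3^(d-1) * 2 * ((d:ℝ)+1)^d * S ^ (4-(d:ℝ)) := by
              rw [e8, hc]; ring
theorem stmt11 (d : ℕ) (hd : 5 ≤ d) :
    ∃ C : ℝ, 0 < C ∧
      ∀ v w : Fin d → ℤ,
        Summable (fun x : Fin d → ℤ =>
            jap (v - x) ^ (2 - (d : ℝ)) * jap (x - w) ^ (2 - (d : ℝ))) ∧
          (∑' x : Fin d → ℤ, jap (v - x) ^ (2 - (d : ℝ)) * jap (x - w) ^ (2 - (d : ℝ))) ≤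
            C * jap (v - w) ^ (4 - (d : ℝ)) := by
  have hdr : (5:ℝ) ≤ (d:ℝ) := by exact_mod_cast hd
  set CA : ℝ := (2*(d:ℝ)+1) * 3^(d-1) * 9 with hCA
  set CB : ℝ := (2*(d:ℝ)+1) * 3^(d-1) * 2 * ((d:ℝ)+1)^d with hCB
  have hCA0 : 0 < CA := by rw [hCA]; positivity
  have hCB0 : 0 < CB := by rw [hCB]; positivity
  set C : ℝ := (2*CA + 2*CB) * 2^((d:ℝ)) with hCdef
  have hC0 : 0 < C := by rw [hCdef]; positivity
  refine ⟨C, hC0, fun v w => ?_⟩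
  set R : ℝ := jap (v - w) with hR
  have hR1 : 1 ≤ R := one_le_jap _
  have hR0 : 0 < R := by linarith
  have hR2 : 1/2 ≤ R/2 := by linarith
  have hR20 : 0 < R/2 := by linarith
  set f : (Fin d → ℤ) → ℝ :=
    fun x => jap (v - x) ^ (2 - (d : ℝ)) * jap (x - w) ^ (2 - (d : ℝ)) with hf
  have hf0 : ∀ x, 0 ≤ f x := fun x =>
    mul_nonneg (Real.rpow_nonneg (jap_pos _).le _) (Real.rpow_nonneg (jap_pos _).le _)
  have hhalf : (R/2) ^ (4-(d:ℝ)) ≤ 2^((d:ℝ)) * R ^ (4-(d:ℝ)) := by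
    rw [Real.div_rpow hR0.le (by norm_num)]
    rw [div_eq_mul_inv, ← Real.rpow_neg (by norm_num)]
    have h1 : (2:ℝ) ^ (-(4-(d:ℝ))) ≤ 2^((d:ℝ)) :=
      Real.rpow_le_rpow_of_exponent_le one_le_two (by linarith)
    have h2 : (0:ℝ) ≤ R ^ (4-(d:ℝ)) := Real.rpow_nonneg hR0.le _
    calc R ^ (4-(d:ℝ)) * (2:ℝ) ^ (-(4-(d:ℝ))) ≤ R ^ (4-(d:ℝ)) * 2^((d:ℝ)) :=
          mul_le_mul_of_nonneg_left h1 h2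
      _ = 2^((d:ℝ)) * R ^ (4-(d:ℝ)) := by ring
  set t1 : (Fin d → ℤ) → ℝ := fun x =>
    if jap (x-w) ≤ R/2 then (R/2) ^ (2-(d:ℝ)) * jap (x-w) ^ (2-(d:ℝ)) else 0 with ht1
  set t2 : (Fin d → ℤ) → ℝ := fun x =>
    if jap (v-x) ≤ R/2 then (R/2) ^ (2-(d:ℝ)) * jap (v-x) ^ (2-(d:ℝ)) else 0 with ht2
  set t3 : (Fin d → ℤ) → ℝ := fun x =>
    if R/2 < jap (x-w) then jap (x-w) ^ (4-2*(d:ℝ)) else 0 with ht3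
  set t4 : (Fin d → ℤ) → ℝ := fun x =>
    if R/2 < jap (v-x) then jap (v-x) ^ (4-2*(d:ℝ)) else 0 with ht4
  have ht10 : ∀ x, 0 ≤ t1 x := by
    intro x; rw [ht1]; dsimp only; split
    · exact mul_nonneg (Real.rpow_nonneg hR20.le _) (Real.rpow_nonneg (jap_pos _).le _)
    · exact le_refl 0
  have ht20 : ∀ x, 0 ≤ t2 x := by
    intro x; rw [ht2]; dsimp only; split
    · exact mul_nonneg (Real.rpow_nonneg hR20.le _) (Real.rpow_nonneg (jap_pos _).le _)
    · exact le_refl 0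
  have ht30 : ∀ x, 0 ≤ t3 x := by
    intro x; rw [ht3]; dsimp only; split
    · exact Real.rpow_nonneg (jap_pos _).le _
    · exact le_refl 0
  have ht40 : ∀ x, 0 ≤ t4 x := by
    intro x; rw [ht4]; dsimp only; split
    · exact Real.rpow_nonneg (jap_pos _).le _
    · exact le_refl 0
  -- pointwise decomposition
  have key : ∀ x, f x ≤ t1 x + t2 x + t3 x + t4 x := by
    intro x
    have ha1 : 1 ≤ jap (v-x) := one_le_jap _
    have hb1 : 1 ≤ jap (x-w) := one_le_jap _
    have ha0 : 0 < jap (v-x) := by linarith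
    have hb0 : 0 < jap (x-w) := by linarith
    have htri : R + 1 ≤ jap (v-x) + jap (x-w) := by
      have h := jap_triangle (v-x) (x-w)
      rw [sub_add_sub_cancel] at h
      rw [hR]
      linarith
    have hexp : 2 - (d:ℝ) ≤ 0 := by linarith
    by_cases h1 : jap (x-w) ≤ R/2
    · have ha : R/2 ≤ jap (v-x) := by linarith
      have hb : f x ≤ t1 x := by
        rw [hf, ht1]
        dsimp only
        rw [if_pos h1]
        exact mul_le_mul_of_nonneg_right
          (Real.rpow_le_rpow_of_nonpos hR20 ha hexp)
          (Real.rpow_nonneg hb0.le _)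
      linarith [ht20 x, ht30 x, ht40 x]
    · by_cases h2 : jap (v-x) ≤ R/2
      · have hb : f x ≤ t2 x := by
          rw [hf, ht2]
          dsimp only
          rw [if_pos h2]
          have hbge : R/2 ≤ jap (x-w) := by linarith
          rw [mul_comm ((R/2) ^ (2-(d:ℝ))) _]
          exact mul_le_mul_of_nonneg_left
            (Real.rpow_le_rpow_of_nonpos hR20 hbge hexp)
            (Real.rpow_nonneg ha0.le _)
        linarith [ht10 x, ht30 x, ht40 x]
      · push_neg at h1 h2
        by_cases h3 : jap (x-w) ≤ jap (v-x)
        · have hb : f x ≤ t3 x := by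
            rw [hf, ht3]
            dsimp only
            rw [if_pos h1]
            have step : jap (v-x) ^ (2-(d:ℝ)) * jap (x-w) ^ (2-(d:ℝ))
                ≤ jap (x-w) ^ (2-(d:ℝ)) * jap (x-w) ^ (2-(d:ℝ)) :=
              mul_le_mul_of_nonneg_right
                (Real.rpow_le_rpow_of_nonpos hb0 h3 hexp)
                (Real.rpow_nonneg hb0.le _)
            apply step.trans
            rw [← Real.rpow_add hb0]
            apply le_of_eq
            congr 1
            ring
          linarith [ht10 x, ht20 x, ht40 x]
        · push_neg at h3
          have hb : f x ≤ t4 x := by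
            rw [hf, ht4]
            dsimp only
            rw [if_pos h2]
            have step : jap (v-x) ^ (2-(d:ℝ)) * jap (x-w) ^ (2-(d:ℝ))
                ≤ jap (v-x) ^ (2-(d:ℝ)) * jap (v-x) ^ (2-(d:ℝ)) :=
              mul_le_mul_of_nonneg_left
                (Real.rpow_le_rpow_of_nonpos ha0 h3.le hexp)
                (Real.rpow_nonneg ha0.le _)
            apply step.trans
            rw [← Real.rpow_add ha0]
            apply le_of_eq
            congr 1
            ring
          linarith [ht10 x, ht20 x, ht30 x]
  -- sums of the pieces in ℝ≥0∞
  have hhalf' : ∀ c : ℝ, 0 ≤ c → ENNReal.ofReal (c * (R/2) ^ (4-(d:ℝ)))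
      ≤ ENNReal.ofReal (c * 2^((d:ℝ)) * R ^ (4-(d:ℝ))) := by
    intro c hc
    apply ENNReal.ofReal_le_ofReal
    calc c * (R/2) ^ (4-(d:ℝ)) ≤ c * (2^((d:ℝ)) * R ^ (4-(d:ℝ))) :=
          mul_le_mul_of_nonneg_left hhalf hc
      _ = c * 2^((d:ℝ)) * R ^ (4-(d:ℝ)) := by ring
  have hS1 : ∑' x : Fin d → ℤ, ENNReal.ofReal (t1 x)
      ≤ ENNReal.ofReal (CA * 2^((d:ℝ)) * R ^ (4-(d:ℝ))) := by
    have hfact : ∀ x : Fin d → ℤ, ENNReal.ofReal (t1 x)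
        = ENNReal.ofReal ((R/2) ^ (2-(d:ℝ)))
          * ENNReal.ofReal (if jap (x-w) ≤ R/2 then jap (x-w) ^ (2-(d:ℝ)) else 0) := by
      intro x
      rw [ht1]
      dsimp only
      by_cases hx : jap (x-w) ≤ R/2
      · rw [if_pos hx, if_pos hx, ENNReal.ofReal_mul (Real.rpow_nonneg hR20.le _)]
      · rw [if_neg hx, if_neg hx, ENNReal.ofReal_zero, mul_zero]
    rw [tsum_congr hfact, ENNReal.tsum_mul_left]
    have htrans : ∑' x : Fin d → ℤ,
        ENNReal.ofReal (if jap (x-w) ≤ R/2 then jap (x-w) ^ (2-(d:ℝ)) else 0)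
        = ∑' y : Fin d → ℤ,
        ENNReal.ofReal (if jap y ≤ R/2 then jap y ^ (2-(d:ℝ)) else 0) := by
      exact (Equiv.subRight w).tsum_eq
        (fun y => ENNReal.ofReal (if jap y ≤ R/2 then jap y ^ (2-(d:ℝ)) else 0))
    rw [htrans]
    calc ENNReal.ofReal ((R/2) ^ (2-(d:ℝ)))
          * ∑' y : Fin d → ℤ, ENNReal.ofReal (if jap y ≤ R/2 then jap y ^ (2-(d:ℝ)) else 0)
        ≤ ENNReal.ofReal ((R/2) ^ (2-(d:ℝ)))
          * ENNReal.ofReal ((2*(d:ℝ)+1) * 3^(d-1) * 9 * (R/2)^2) :=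
          mul_le_mul_right (lemA (by omega) (R/2) hR2) _
      _ = ENNReal.ofReal ((R/2) ^ (2-(d:ℝ)) * (CA * (R/2)^2)) := by
          rw [← ENNReal.ofReal_mul (Real.rpow_nonneg hR20.le _), hCA]
      _ = ENNReal.ofReal (CA * (R/2) ^ (4-(d:ℝ))) := by
          congr 1
          rw [← Real.rpow_natCast (R/2) 2, ← mul_assoc, mul_comm ((R/2) ^ (2-(d:ℝ))) CA,
            mul_assoc, ← Real.rpow_add hR20]
          have hexpeq : (2:ℝ) - (d:ℝ) + ((2:ℕ):ℝ) = 4 - (d:ℝ) := by push_cast; ring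
          rw [hexpeq]
      _ ≤ ENNReal.ofReal (CA * 2^((d:ℝ)) * R ^ (4-(d:ℝ))) := hhalf' CA hCA0.le
  have hS2 : ∑' x : Fin d → ℤ, ENNReal.ofReal (t2 x)
      ≤ ENNReal.ofReal (CA * 2^((d:ℝ)) * R ^ (4-(d:ℝ))) := by
    have hfact : ∀ x : Fin d → ℤ, ENNReal.ofReal (t2 x)
        = ENNReal.ofReal ((R/2) ^ (2-(d:ℝ)))
          * ENNReal.ofReal (if jap (v-x) ≤ R/2 then jap (v-x) ^ (2-(d:ℝ)) else 0) := by
      intro x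
      rw [ht2]
      dsimp only
      by_cases hx : jap (v-x) ≤ R/2
      · rw [if_pos hx, if_pos hx, ENNReal.ofReal_mul (Real.rpow_nonneg hR20.le _)]
      · rw [if_neg hx, if_neg hx, ENNReal.ofReal_zero, mul_zero]
    rw [tsum_congr hfact, ENNReal.tsum_mul_left]
    have htrans : ∑' x : Fin d → ℤ,
        ENNReal.ofReal (if jap (v-x) ≤ R/2 then jap (v-x) ^ (2-(d:ℝ)) else 0)
        = ∑' y : Fin d → ℤ,
        ENNReal.ofReal (if jap y ≤ R/2 then jap y ^ (2-(d:ℝ)) else 0) := by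
      exact (Equiv.subLeft v).tsum_eq
        (fun y => ENNReal.ofReal (if jap y ≤ R/2 then jap y ^ (2-(d:ℝ)) else 0))
    rw [htrans]
    calc ENNReal.ofReal ((R/2) ^ (2-(d:ℝ)))
          * ∑' y : Fin d → ℤ, ENNReal.ofReal (if jap y ≤ R/2 then jap y ^ (2-(d:ℝ)) else 0)
        ≤ ENNReal.ofReal ((R/2) ^ (2-(d:ℝ)))
          * ENNReal.ofReal ((2*(d:ℝ)+1) * 3^(d-1) * 9 * (R/2)^2) :=
          mul_le_mul_right (lemA (by omega) (R/2) hR2) _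
      _ = ENNReal.ofReal ((R/2) ^ (2-(d:ℝ)) * (CA * (R/2)^2)) := by
          rw [← ENNReal.ofReal_mul (Real.rpow_nonneg hR20.le _), hCA]
      _ = ENNReal.ofReal (CA * (R/2) ^ (4-(d:ℝ))) := by
          congr 1
          rw [← Real.rpow_natCast (R/2) 2, ← mul_assoc, mul_comm ((R/2) ^ (2-(d:ℝ))) CA,
            mul_assoc, ← Real.rpow_add hR20]
          have hexpeq : (2:ℝ) - (d:ℝ) + ((2:ℕ):ℝ) = 4 - (d:ℝ) := by push_cast; ring
          rw [hexpeq]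
      _ ≤ ENNReal.ofReal (CA * 2^((d:ℝ)) * R ^ (4-(d:ℝ))) := hhalf' CA hCA0.le
  have hS3 : ∑' x : Fin d → ℤ, ENNReal.ofReal (t3 x)
      ≤ ENNReal.ofReal (CB * 2^((d:ℝ)) * R ^ (4-(d:ℝ))) := by
    have htrans : ∑' x : Fin d → ℤ, ENNReal.ofReal (t3 x)
        = ∑' y : Fin d → ℤ,
        ENNReal.ofReal (if R/2 < jap y then jap y ^ (4-2*(d:ℝ)) else 0) := by
      rw [ht3]
      exact (Equiv.subRight w).tsum_eq
        (fun y => ENNReal.ofReal (if R/2 < jap y then jap y ^ (4-2*(d:ℝ)) else 0))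
    rw [htrans]
    calc ∑' y : Fin d → ℤ, ENNReal.ofReal (if R/2 < jap y then jap y ^ (4-2*(d:ℝ)) else 0)
        ≤ ENNReal.ofReal ((2*(d:ℝ)+1) * 3^(d-1) * 2 * ((d:ℝ)+1)^d * (R/2) ^ (4-(d:ℝ))) :=
          lemB hd (R/2) hR2
      _ = ENNReal.ofReal (CB * (R/2) ^ (4-(d:ℝ))) := by rw [hCB]
      _ ≤ ENNReal.ofReal (CB * 2^((d:ℝ)) * R ^ (4-(d:ℝ))) := hhalf' CB hCB0.le
  have hS4 : ∑' x : Fin d → ℤ, ENNReal.ofReal (t4 x)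
      ≤ ENNReal.ofReal (CB * 2^((d:ℝ)) * R ^ (4-(d:ℝ))) := by
    have htrans : ∑' x : Fin d → ℤ, ENNReal.ofReal (t4 x)
        = ∑' y : Fin d → ℤ,
        ENNReal.ofReal (if R/2 < jap y then jap y ^ (4-2*(d:ℝ)) else 0) := by
      rw [ht4]
      exact (Equiv.subLeft v).tsum_eq
        (fun y => ENNReal.ofReal (if R/2 < jap y then jap y ^ (4-2*(d:ℝ)) else 0))
    rw [htrans]
    calc ∑' y : Fin d → ℤ, ENNReal.ofReal (if R/2 < jap y then jap y ^ (4-2*(d:ℝ)) else 0)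
        ≤ ENNReal.ofReal ((2*(d:ℝ)+1) * 3^(d-1) * 2 * ((d:ℝ)+1)^d * (R/2) ^ (4-(d:ℝ))) :=
          lemB hd (R/2) hR2
      _ = ENNReal.ofReal (CB * (R/2) ^ (4-(d:ℝ))) := by rw [hCB]
      _ ≤ ENNReal.ofReal (CB * 2^((d:ℝ)) * R ^ (4-(d:ℝ))) := hhalf' CB hCB0.le
  -- total ENNReal bound
  have hsum : ∑' x : Fin d → ℤ, ENNReal.ofReal (f x)
      ≤ ENNReal.ofReal (C * R ^ (4-(d:ℝ))) := by
    have hpt : ∀ x : Fin d → ℤ, ENNReal.ofReal (f x)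
        ≤ ENNReal.ofReal (t1 x) + ENNReal.ofReal (t2 x)
          + ENNReal.ofReal (t3 x) + ENNReal.ofReal (t4 x) := by
      intro x
      calc ENNReal.ofReal (f x) ≤ ENNReal.ofReal (t1 x + t2 x + t3 x + t4 x) :=
            ENNReal.ofReal_le_ofReal (key x)
        _ = ENNReal.ofReal (t1 x) + ENNReal.ofReal (t2 x)
            + ENNReal.ofReal (t3 x) + ENNReal.ofReal (t4 x) := by
            rw [ENNReal.ofReal_add (add_nonneg (add_nonneg (ht10 x) (ht20 x)) (ht30 x)) (ht40 x),
              ENNReal.ofReal_add (add_nonneg (ht10 x) (ht20 x)) (ht30 x),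
              ENNReal.ofReal_add (ht10 x) (ht20 x)]
    calc ∑' x : Fin d → ℤ, ENNReal.ofReal (f x)
        ≤ ∑' x : Fin d → ℤ, (ENNReal.ofReal (t1 x) + ENNReal.ofReal (t2 x)
          + ENNReal.ofReal (t3 x) + ENNReal.ofReal (t4 x)) := ENNReal.tsum_le_tsum hpt
      _ = ((∑' x : Fin d → ℤ, ENNReal.ofReal (t1 x))
          + (∑' x : Fin d → ℤ, ENNReal.ofReal (t2 x))
          + (∑' x : Fin d → ℤ, ENNReal.ofReal (t3 x))
          + (∑' x : Fin d → ℤ, ENNReal.ofReal (t4 x))) := by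
          rw [ENNReal.tsum_add, ENNReal.tsum_add, ENNReal.tsum_add]
      _ ≤ (ENNReal.ofReal (CA * 2^((d:ℝ)) * R ^ (4-(d:ℝ)))
          + ENNReal.ofReal (CA * 2^((d:ℝ)) * R ^ (4-(d:ℝ)))
          + ENNReal.ofReal (CB * 2^((d:ℝ)) * R ^ (4-(d:ℝ)))
          + ENNReal.ofReal (CB * 2^((d:ℝ)) * R ^ (4-(d:ℝ)))) := by
          gcongr
      _ = ENNReal.ofReal (C * R ^ (4-(d:ℝ))) := by
          have hRr : (0:ℝ) ≤ R ^ (4-(d:ℝ)) := Real.rpow_nonneg hR0.le _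
          have h2d : (0:ℝ) ≤ 2^((d:ℝ)) := Real.rpow_nonneg (by norm_num) _
          have hA' : (0:ℝ) ≤ CA * 2^((d:ℝ)) * R ^ (4-(d:ℝ)) :=
            mul_nonneg (mul_nonneg hCA0.le h2d) hRr
          have hB' : (0:ℝ) ≤ CB * 2^((d:ℝ)) * R ^ (4-(d:ℝ)) :=
            mul_nonneg (mul_nonneg hCB0.le h2d) hRr
          rw [← ENNReal.ofReal_add hA' hA', ← ENNReal.ofReal_add (by linarith) hB',
            ← ENNReal.ofReal_add (by linarith) hB']
          congr 1
          rw [hCdef]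
          ring
  -- conclude
  have hne : (∑' x : Fin d → ℤ, ENNReal.ofReal (f x)) ≠ ⊤ :=
    (lt_of_le_of_lt hsum ENNReal.ofReal_lt_top).ne
  have hsummable : Summable f := by
    set f' : (Fin d → ℤ) → NNReal := fun x => ⟨f x, hf0 x⟩ with hf'
    have hcoe : ∀ x, (f' x : ℝ≥0∞) = ENNReal.ofReal (f x) := by
      intro x
      rw [ENNReal.ofReal, Real.toNNReal_of_nonneg (hf0 x)]
      rfl
    have hne' : (∑' x, (f' x : ℝ≥0∞)) ≠ ⊤ := by
      rw [tsum_congr hcoe]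
      exact hne
    have := ENNReal.tsum_coe_ne_top_iff_summable.mp hne'
    have h2 := NNReal.summable_coe.mpr this
    exact h2
  constructor
  · exact hsummable
  · have heq : ENNReal.ofReal (∑' x, f x) = ∑' x, ENNReal.ofReal (f x) :=
      ENNReal.ofReal_tsum_of_nonneg hf0 hsummable
    have hle : ENNReal.ofReal (∑' x, f x) ≤ ENNReal.ofReal (C * R ^ (4-(d:ℝ))) := by
      rw [heq]; exact hsum
    have hRr : (0:ℝ) ≤ R ^ (4-(d:ℝ)) := Real.rpow_nonneg hR0.le _
    rw [ENNReal.ofReal_le_ofReal_iff (mul_nonneg hC0.le hRr)] at hle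
    exact hle
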